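/- Optimality of the backward error projection: let L be a symmetric Hermitian n×n complex matrix (Lᵀ = L and L* = L) and ψ ∈ ℂ^n a nonzero real vector (ψ̄ = ψ). Then any symmetric Hermitian matrix L̃ with L̃ψ = 0 satisfies trace((L̃ - L)²) ≥ τ_L(ψ) := 2(Lψ)ᵀ(Lψ)/(ψᵀψ) - (ψᵀLψ/ψᵀψ)², with equality if and only if L̃ = (1 - ψψᵀ/ψᵀψ) L (1 - ψψᵀ/ψᵀψ). Moreover, (Lψ)ᵀ(Lψ)/(ψᵀψ) ≤ τ_L(ψ) ≤ 2(Lψ)ᵀ(Lψ)/(ψᵀψ), and τ_L(ψ) = 0 if and only if Lψ = 0. -/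

import Mathlib

open Matrix ComplexOrder

private lemma mul_vmv {n : ℕ} (M : Matrix (Fin n) (Fin n) ℂ) (a b : Fin n → ℂ) :
    M * vecMulVec a b = vecMulVec (M *ᵥ a) b := by
  ext i j
  simp [Matrix.mul_apply, vecMulVec_apply, mulVec, dotProduct, Finset.sum_mul, mul_assoc]

private lemma vmv_mul {n : ℕ} (a b : Fin n → ℂ) (M : Matrix (Fin n) (Fin n) ℂ) :
    vecMulVec a b * M = vecMulVec a (Mᵀ *ᵥ b) := by
  ext i j
  simp [Matrix.mul_apply, vecMulVec_apply, mulVec, dotProduct, Finset.mul_sum, mul_assoc,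
    transpose_apply, mul_comm, mul_left_comm]

private lemma vmv_mul_vmv {n : ℕ} (a b c d : Fin n → ℂ) :
    vecMulVec a b * vecMulVec c d = (b ⬝ᵥ c) • vecMulVec a d := by
  ext i j
  simp [Matrix.mul_apply, vecMulVec_apply, dotProduct, Finset.mul_sum, Finset.sum_mul]
  ring_nf
  congr 1; ext k; ring

private lemma trace_vmv {n : ℕ} (a b : Fin n → ℂ) : (vecMulVec a b).trace = a ⬝ᵥ b := by
  simp [Matrix.trace, vecMulVec_apply, dotProduct, Matrix.diag]

private lemma vmv_mulVec {n : ℕ} (a b x : Fin n → ℂ) : vecMulVec a b *ᵥ x = (b ⬝ᵥ x) • a := by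
  ext i
  simp [mulVec, vecMulVec_apply, dotProduct, Finset.sum_mul, mul_comm, mul_left_comm,
    Finset.mul_sum]

private lemma vmv_zero_left {n : ℕ} (b : Fin n → ℂ) : vecMulVec (0 : Fin n → ℂ) b = 0 := by
  ext i j; simp [vecMulVec_apply]

/-- For a real symmetric matrix, trace of the square is nonneg, zero iff the matrix is zero. -/
private lemma trace_sq_real_sym {n : ℕ} (D : Matrix (Fin n) (Fin n) ℂ)
    (hT : Dᵀ = D) (hH : Dᴴ = D) :
    0 ≤ (D * D).trace ∧ ((D * D).trace = 0 ↔ D = 0) := by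
  have hsymm : ∀ i j, D j i = D i j := by
    intro i j
    have := congrFun (congrFun hT i) j
    simpa using this
  have hre : ∀ i j, (starRingEnd ℂ) (D i j) = D i j := by
    intro i j
    have h2 : (starRingEnd ℂ) (D j i) = D i j := by
      have := congrFun (congrFun hH i) j
      simpa using this
    rw [hsymm i j] at h2; exact h2
  have hform : (D * D).trace = ((∑ i, ∑ j, Complex.normSq (D i j) : ℝ) : ℂ) := by
    push_cast
    rw [Matrix.trace]
    simp only [Matrix.diag, Matrix.mul_apply]
    refine Finset.sum_congr rfl fun i _ => Finset.sum_congr rfl fun j _ => ?_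
    rw [hsymm i j]
    nth_rewrite 2 [← hre i j]
    rw [Complex.mul_conj]
  have hnn : (0:ℝ) ≤ ∑ i, ∑ j, Complex.normSq (D i j) :=
    Finset.sum_nonneg fun i _ => Finset.sum_nonneg fun j _ => Complex.normSq_nonneg _
  constructor
  · rw [hform]
    exact_mod_cast Complex.real_le_real.mpr hnn
  · rw [hform]
    constructor
    · intro h
      have h0 : (∑ i, ∑ j, Complex.normSq (D i j)) = 0 := by exact_mod_cast h
      ext i j
      have h1 := (Finset.sum_eq_zero_iff_of_nonneg
        (fun i _ => Finset.sum_nonneg fun j _ => Complex.normSq_nonneg (D i j))).mp h0 i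
        (Finset.mem_univ i)
      have h2 := (Finset.sum_eq_zero_iff_of_nonneg
        (fun j _ => Complex.normSq_nonneg (D i j))).mp h1 j (Finset.mem_univ j)
      simpa using Complex.normSq_eq_zero.mp h2
    · intro h; subst h; simp

set_option maxHeartbeats 1000000 in
theorem stmt_19 {n : ℕ} (L : Matrix (Fin n) (Fin n) ℂ)
    (hLsym : Lᵀ = L) (hLherm : Lᴴ = L)
    (ψ : Fin n → ℂ) (hψ : ψ ≠ 0) (hψreal : star ψ = ψ)
    (τ : ℂ)
    (hτ : τ = 2 * ((L *ᵥ ψ) ⬝ᵥ (L *ᵥ ψ)) / (ψ ⬝ᵥ ψ)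
            - ((ψ ⬝ᵥ (L *ᵥ ψ)) / (ψ ⬝ᵥ ψ)) ^ 2) :
    (∀ Ltil : Matrix (Fin n) (Fin n) ℂ,
      Ltilᵀ = Ltil → Ltilᴴ = Ltil → Ltil *ᵥ ψ = 0 →
      τ ≤ ((Ltil - L) * (Ltil - L)).trace ∧
      (((Ltil - L) * (Ltil - L)).trace = τ ↔
        Ltil = (1 - (ψ ⬝ᵥ ψ)⁻¹ • vecMulVec ψ ψ) * L *
               (1 - (ψ ⬝ᵥ ψ)⁻¹ • vecMulVec ψ ψ))) ∧
    ((L *ᵥ ψ) ⬝ᵥ (L *ᵥ ψ)) / (ψ ⬝ᵥ ψ) ≤ τ ∧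
    τ ≤ 2 * ((L *ᵥ ψ) ⬝ᵥ (L *ᵥ ψ)) / (ψ ⬝ᵥ ψ) ∧
    (τ = 0 ↔ L *ᵥ ψ = 0) := by
  -- realness facts
  have hLre : ∀ i j, (starRingEnd ℂ) (L i j) = L i j := by
    intro i j
    have h1 : L j i = L i j := by
      have := congrFun (congrFun hLsym i) j
      simpa using this
    have h2 : (starRingEnd ℂ) (L j i) = L i j := by
      have := congrFun (congrFun hLherm i) j
      simpa using this
    rw [h1] at h2; exact h2
  have hψre : ∀ i, (starRingEnd ℂ) (ψ i) = ψ i := by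
    intro i
    have := congrFun hψreal i
    simpa using this
  set v : Fin n → ℂ := L *ᵥ ψ with hv
  have hvre : ∀ i, (starRingEnd ℂ) (v i) = v i := by
    intro i
    simp only [hv, mulVec, dotProduct, map_sum, _root_.map_mul]
    exact Finset.sum_congr rfl fun j _ => by rw [hLre i j, hψre j]
  set x : Fin n → ℝ := fun i => (ψ i).re with hxdef
  have hx : ∀ i, ψ i = ((x i : ℝ) : ℂ) :=
    fun i => (Complex.conj_eq_iff_re.mp (hψre i)).symm
  set y : Fin n → ℝ := fun i => (v i).re with hydef
  have hy : ∀ i, v i = ((y i : ℝ) : ℂ) :=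
    fun i => (Complex.conj_eq_iff_re.mp (hvre i)).symm
  set sr : ℝ := ∑ i, x i ^ 2 with hsrdef
  set ar : ℝ := ∑ i, x i * y i with hardef
  set br : ℝ := ∑ i, y i ^ 2 with hbrdef
  have hs : ψ ⬝ᵥ ψ = (sr : ℂ) := by
    simp only [dotProduct, hsrdef]
    push_cast
    exact Finset.sum_congr rfl fun i _ => by rw [hx i]; ring
  have ha : ψ ⬝ᵥ v = (ar : ℂ) := by
    simp only [dotProduct, hardef]
    push_cast
    exact Finset.sum_congr rfl fun i _ => by rw [hx i, hy i]
  have hb : v ⬝ᵥ v = (br : ℂ) := by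
    simp only [dotProduct, hbrdef]
    push_cast
    exact Finset.sum_congr rfl fun i _ => by rw [hy i]; ring
  have hsrpos : 0 < sr := by
    have : ∃ i, ψ i ≠ 0 := by
      by_contra h
      push_neg at h
      exact hψ (funext h)
    obtain ⟨i, hi⟩ := this
    have hxi : x i ≠ 0 := by
      intro h; apply hi; rw [hx i, h]; simp
    have : x i ^ 2 ≤ sr :=
      Finset.single_le_sum (fun j _ => sq_nonneg (x j)) (Finset.mem_univ i)
    have hpos : 0 < x i ^ 2 := by positivity
    linarith
  have hsrne : sr ≠ 0 := ne_of_gt hsrpos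
  have hsne : ψ ⬝ᵥ ψ ≠ 0 := by
    rw [hs]; exact_mod_cast (Complex.ofReal_ne_zero.mpr hsrne)
  have hCS : ar ^ 2 ≤ sr * br := by
    have := Finset.sum_mul_sq_le_sq_mul_sq Finset.univ x y
    simpa [hsrdef, hardef, hbrdef] using this
  have hbrnn : 0 ≤ br := Finset.sum_nonneg fun i _ => sq_nonneg (y i)
  have hτr : τ = ((2 * br / sr - (ar / sr) ^ 2 : ℝ) : ℂ) := by
    rw [hτ, hs, ha, hb]
    push_cast
    ring
  clear_value v x y sr ar br
  refine ⟨?_, ?_, ?_, ?_⟩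
  · -- main part
    intro Ltil hT hH h0
    set c : ℂ := (ψ ⬝ᵥ ψ)⁻¹ with hcdef
    set Q : Matrix (Fin n) (Fin n) ℂ := vecMulVec ψ ψ with hQdef
    set G : Matrix (Fin n) (Fin n) ℂ := (1 - c • Q) * L * (1 - c • Q) with hGdef
    have hcs : c * (ψ ⬝ᵥ ψ) = 1 := inv_mul_cancel₀ hsne
    have hcr : star c = c := by
      rw [hcdef, hs, ← Complex.ofReal_inv]
      exact Complex.conj_ofReal _
    set X : Matrix (Fin n) (Fin n) ℂ := vecMulVec ψ v with hXdef
    set Y : Matrix (Fin n) (Fin n) ℂ := vecMulVec v ψ with hYdef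
    have hQL : Q * L = X := by rw [hQdef, vmv_mul, hLsym, hXdef, ← hv]
    have hLQ : L * Q = Y := by rw [hQdef, mul_vmv, ← hv, hYdef]
    have hXQ : X * Q = (v ⬝ᵥ ψ) • Q := by rw [hXdef, hQdef, vmv_mul_vmv]
    have hG : G = L - c • Y - c • X + (c * c * (v ⬝ᵥ ψ)) • Q := by
      rw [hGdef]
      simp only [sub_mul, mul_sub, one_mul, mul_one, Matrix.smul_mul, Matrix.mul_smul,
        smul_sub, sub_smul, smul_smul, hQL, hLQ, hXQ]
      module
    have hGψ : G *ᵥ ψ = 0 := by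
      have hPψ : (1 - c • Q) *ᵥ ψ = 0 := by
        rw [Matrix.sub_mulVec, Matrix.one_mulVec, Matrix.smul_mulVec, hQdef,
          vmv_mulVec, smul_smul, hcs, one_smul, sub_self]
      rw [hGdef, ← Matrix.mulVec_mulVec, hPψ, Matrix.mulVec_zero]
    have hQT : Qᵀ = Q := by
      ext i j; simp [hQdef, vecMulVec_apply, mul_comm]
    have hQH : Qᴴ = Q := by
      ext i j
      simp only [hQdef, conjTranspose_apply, vecMulVec_apply, star_mul']
      rw [show star (ψ j) = ψ j from hψre j, show star (ψ i) = ψ i from hψre i, mul_comm]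
    have hGT : Gᵀ = G := by
      rw [hGdef]
      rw [Matrix.transpose_mul, Matrix.transpose_mul, Matrix.transpose_sub,
        Matrix.transpose_smul, Matrix.transpose_one, hQT, hLsym]
      rw [mul_assoc]
    have hGH : Gᴴ = G := by
      rw [hGdef]
      rw [Matrix.conjTranspose_mul, Matrix.conjTranspose_mul, Matrix.conjTranspose_sub,
        Matrix.conjTranspose_smul, Matrix.conjTranspose_one, hQH, hLherm, hcr]
      rw [← mul_assoc]
    set D : Matrix (Fin n) (Fin n) ℂ := Ltil - G with hDdef
    have hDT : Dᵀ = D := by rw [hDdef, Matrix.transpose_sub, hT, hGT]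
    have hDH : Dᴴ = D := by rw [hDdef, Matrix.conjTranspose_sub, hH, hGH]
    have hDψ : D *ᵥ ψ = 0 := by
      rw [hDdef, Matrix.sub_mulVec, h0, hGψ, sub_self]
    -- the set M := G - L
    set M : Matrix (Fin n) (Fin n) ℂ := G - L with hMdef
    have hEM : Ltil - L = D + M := by rw [hDdef, hMdef]; abel
    have hM : M = (c * c * (v ⬝ᵥ ψ)) • Q - c • Y - c • X := by
      rw [hMdef, hG]; abel
    clear_value c Q G X Y D M
    -- trace D*M = 0
    have hDX : D * X = 0 := by rw [hXdef, mul_vmv, hDψ, vmv_zero_left]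
    have hDQ : D * Q = 0 := by rw [hQdef, mul_vmv, hDψ, vmv_zero_left]
    have hDYtr : (D * Y).trace = 0 := by
      rw [hYdef, mul_vmv, trace_vmv]
      rw [dotProduct_comm, Matrix.dotProduct_mulVec, ← Matrix.mulVec_transpose, hDT, hDψ]
      simp
    have htrDM : (D * M).trace = 0 := by
      rw [hM]
      rw [mul_sub, mul_sub, Matrix.mul_smul, Matrix.mul_smul, Matrix.mul_smul,
        hDX, hDQ]
      rw [Matrix.trace_sub, Matrix.trace_sub, Matrix.trace_smul, Matrix.trace_smul,
        Matrix.trace_smul, hDYtr]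
      simp
    have htrMD : (M * D).trace = 0 := by rw [Matrix.trace_mul_comm]; exact htrDM
    -- trace M*M = τ
    have htrMM : (M * M).trace = τ := by
      rw [hM, hQdef, hXdef, hYdef]
      simp only [sub_mul, mul_sub, Matrix.smul_mul, Matrix.mul_smul, smul_smul,
        vmv_mul_vmv, Matrix.trace_sub, Matrix.trace_smul, trace_vmv, smul_eq_mul]
      have hvψ : v ⬝ᵥ ψ = (ar : ℂ) := by rw [dotProduct_comm]; exact ha
      simp only [hvψ, ha, hb, hcdef, hs, hτr]
      push_cast
      field_simp
      ring
    have hkey : ((Ltil - L) * (Ltil - L)).trace = (D * D).trace + τ := by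
      rw [hEM, add_mul, mul_add, mul_add]
      rw [Matrix.trace_add, Matrix.trace_add, Matrix.trace_add, htrDM, htrMD, htrMM]
      ring
    obtain ⟨hDDnn, hDDzero⟩ := trace_sq_real_sym D hDT hDH
    constructor
    · rw [hkey]
      calc τ = 0 + τ := by ring
      _ ≤ (D * D).trace + τ := by exact add_le_add_left hDDnn τ
    · rw [hkey]
      constructor
      · intro h
        have h2 : (D * D).trace = 0 := by
          have h4 : (D * D).trace + τ = 0 + τ := by rw [h]; ring
          exact add_right_cancel h4
        have hD0 : D = 0 := hDDzero.mp h2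
        have h3 : Ltil - G = 0 := by rw [← hDdef]; exact hD0
        rw [sub_eq_zero] at h3
        exact h3
      · intro h
        have hD0 : D = 0 := by rw [hDdef, h]; exact sub_self _
        rw [hD0]
        simp
  · -- lower bound
    rw [hb, hs, hτr, ← Complex.ofReal_div, Complex.real_le_real]
    have h1 : (ar / sr) ^ 2 ≤ br / sr := by
      rw [div_pow, div_le_div_iff₀ (by positivity) hsrpos]
      nlinarith [hCS, hsrpos, mul_le_mul_of_nonneg_right hCS hsrpos.le]
    have h2 : 2 * br / sr = 2 * (br / sr) := mul_div_assoc 2 br sr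
    linarith
  · -- upper bound
    rw [hb, hs, hτr]
    have h2 : (2 : ℂ) * (br : ℂ) / (sr : ℂ) = ((2 * br / sr : ℝ) : ℂ) := by push_cast; ring
    rw [h2, Complex.real_le_real]
    nlinarith [sq_nonneg (ar / sr)]
  · -- zero iff
    constructor
    · intro h
      rw [hτr] at h
      have h0 : 2 * br / sr - (ar / sr) ^ 2 = 0 := by exact_mod_cast h
      have hbr0 : br = 0 := by
        have h2 : 2 * br * sr = ar ^ 2 := by
          field_simp at h0
          have h3 : sr * (2 * br * sr - ar ^ 2) = 0 := by linear_combination sr * h0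
          rcases mul_eq_zero.mp h3 with h4 | h4
          · exact absurd h4 hsrne
          · linarith
        have hble : br ≤ 0 := by nlinarith [hCS, hsrpos, h2]
        exact le_antisymm hble hbrnn
      have hy0 : ∀ i, y i = 0 := by
        intro i
        have hsum : ∑ j, y j ^ 2 = 0 := by rw [← hbrdef]; exact hbr0
        have h5 := (Finset.sum_eq_zero_iff_of_nonneg
          (fun j (_ : j ∈ Finset.univ) => sq_nonneg (y j))).mp hsum i (Finset.mem_univ i)
        exact pow_eq_zero_iff two_ne_zero |>.mp h5
      funext i
      rw [hy i, hy0 i]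
      simp
    · intro h
      have hy0 : ∀ i, y i = 0 := by
        intro i; rw [hydef]; simp [h]
      have hbr0 : br = 0 := by
        rw [hbrdef]; exact Finset.sum_eq_zero fun i _ => by rw [hy0 i]; ring
      have har0 : ar = 0 := by
        rw [hardef]; exact Finset.sum_eq_zero fun i _ => by rw [hy0 i]; ring
      rw [hτr, hbr0, har0]
      simp
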